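/- Let C be an updown category, k a field of characteristic 0, and define linear operators U, D on the free vector space k(Ob C) by U(p) = Σ_{|p'|=|p|+1} u(p;p')·p' and D(p) = Σ_{|p'|=|p|-1} d(p';p)·p' (with D(0̂) = 0). Then U and D are adjoint with respect to the inner product ⟨p, p'⟩ = |Aut(p)| if p = p' and 0 otherwise; that is, ⟨U(x), y⟩ = ⟨x, D(y)⟩ for all x, y. -/

import Mathlib

/-! Core definitions: updown categories (Hoffman, "Updown categories"). -/

/-- The underlying data of a (small) category equipped with an ℕ-valued rank,
finite levels (given as `Finset`s) and a distinguished rank-0 object `zero`. -/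
structure UpdownData where
  Obj : Type
  Hom : Obj → Obj → Type
  id : ∀ p : Obj, Hom p p
  comp : ∀ {p q r : Obj}, Hom p q → Hom q r → Hom p r
  id_comp : ∀ {p q : Obj} (f : Hom p q), comp (id p) f = f
  comp_id : ∀ {p q : Obj} (f : Hom p q), comp f (id q) = f
  assoc : ∀ {p q r s : Obj} (f : Hom p q) (g : Hom q r) (h : Hom r s),
    comp (comp f g) h = comp f (comp g h)
  rank : Obj → ℕ
  level : ℕ → Finset Obj
  zero : Obj

namespace UpdownData

/-- Axioms A1–A5 of an updown category. -/
structure IsUpdownCat (C : UpdownData) : Prop where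
  /-- `level n` is exactly the (finite) set of objects of rank `n` (A1). -/
  mem_level : ∀ (n : ℕ) (p : C.Obj), p ∈ C.level n ↔ C.rank p = n
  /-- A2: `zero` is the unique rank-0 object. -/
  rank_zero : C.rank C.zero = 0
  zero_unique : ∀ p : C.Obj, C.rank p = 0 → p = C.zero
  /-- A2: there is a morphism from `zero` to every object. -/
  zero_init : ∀ p : C.Obj, Nonempty (C.Hom C.zero p)
  /-- A3: hom-sets are finite. -/
  homFinite : ∀ p q : C.Obj, Finite (C.Hom p q)
  /-- A3: `Hom p q` is empty unless `rank p < rank q` or `p = q`. -/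
  hom_rank : ∀ p q : C.Obj, C.Hom p q → (C.rank p < C.rank q ∨ p = q)
  /-- A3: every endomorphism is invertible, so `Hom p p = Aut p` is a group. -/
  aut_group : ∀ (p : C.Obj) (f : C.Hom p p),
    ∃ g : C.Hom p p, C.comp f g = C.id p ∧ C.comp g f = C.id p
  /-- A4: every morphism raising rank by more than one factors through the
  next level (hence, inductively, through all intermediate levels). -/
  factor : ∀ (p q : C.Obj) (f : C.Hom p q), C.rank p + 1 < C.rank q →
    ∃ (r : C.Obj) (g : C.Hom p r) (h : C.Hom r q),
      C.rank r = C.rank p + 1 ∧ C.comp g h = f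
  /-- A5: `Aut p` acts freely on `Hom p q` by precomposition when
  `rank q = rank p + 1`. -/
  free_pre : ∀ (p q : C.Obj), C.rank q = C.rank p + 1 →
    ∀ (α : C.Hom p p) (f : C.Hom p q), C.comp α f = f → α = C.id p
  /-- A5: `Aut q` acts freely on `Hom p q` by postcomposition when
  `rank q = rank p + 1`. -/
  free_post : ∀ (p q : C.Obj), C.rank q = C.rank p + 1 →
    ∀ (β : C.Hom q q) (f : C.Hom p q), C.comp f β = f → β = C.id q

/-- An updown category is unilateral if all automorphism groups are trivial. -/
def Unilateral (C : UpdownData) : Prop :=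
  ∀ (p : C.Obj) (f : C.Hom p p), f = C.id p

/-- An updown category is simple if there is at most one morphism between any
two objects and morphisms factor uniquely into rank-1 steps (so the object at
each intermediate rank in a factorization is unique). -/
def SimpleUD (C : UpdownData) : Prop :=
  (∀ p q : C.Obj, Subsingleton (C.Hom p q)) ∧
  (∀ (p q : C.Obj) (f : C.Hom p q) (k : ℕ), C.rank p < k → k < C.rank q →
    ∃! r : C.Obj, C.rank r = k ∧
      ∃ (g : C.Hom p r) (h : C.Hom r q), C.comp g h = f)

end UpdownData

/-! Up and down operators on the free vector space `Obj →₀ ℚ`. -/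

namespace UpdownData

variable (C : UpdownData)

/-- `u(p;p') = |Hom(p,p')|/|Aut(p')|` (as a rational number). -/
noncomputable def uQ (p q : C.Obj) : ℚ :=
  (Nat.card (C.Hom p q) : ℚ) / (Nat.card (C.Hom q q) : ℚ)

/-- `d(p;p') = |Hom(p,p')|/|Aut(p)|` (as a rational number). -/
noncomputable def dQ (p q : C.Obj) : ℚ :=
  (Nat.card (C.Hom p q) : ℚ) / (Nat.card (C.Hom p p) : ℚ)

/-- The free `ℚ`-vector space on the objects of `C`. -/
abbrev Vec := C.Obj →₀ ℚ

/-- `U(p) = Σ_{|p'| = |p|+1} u(p;p')·p'`. -/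
noncomputable def Uvec (p : C.Obj) : C.Vec :=
  ∑ q ∈ C.level (C.rank p + 1), C.uQ p q • Finsupp.single q 1

/-- `D(p) = Σ_{|p''| = |p|-1} d(p'';p)·p''`, and `D(0̂) = 0`. -/
noncomputable def Dvec (p : C.Obj) : C.Vec :=
  if C.rank p = 0 then 0
  else ∑ q ∈ C.level (C.rank p - 1), C.dQ q p • Finsupp.single q 1

/-- The up operator. -/
noncomputable def Uop : C.Vec →ₗ[ℚ] C.Vec :=
  Finsupp.lsum ℚ fun p => LinearMap.toSpanSingleton ℚ C.Vec (C.Uvec p)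

/-- The down operator. -/
noncomputable def Dop : C.Vec →ₗ[ℚ] C.Vec :=
  Finsupp.lsum ℚ fun p => LinearMap.toSpanSingleton ℚ C.Vec (C.Dvec p)

/-- The inner product with `⟨p,p⟩ = |Aut(p)|` on basis elements. -/
noncomputable def innerUD (x y : C.Vec) : ℚ :=
  x.sum fun p c => c * y p * (Nat.card (C.Hom p p) : ℚ)

/-- The commutator `DU - UD`. -/
noncomputable def commDU : C.Vec →ₗ[ℚ] C.Vec :=
  C.Dop ∘ₗ C.Uop - C.Uop ∘ₗ C.Dop

/-- Extended multiplicity `u(p;q)`: the coefficient of `q` in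
`U^{|q|-|p|}(p)`, i.e. `⟨U^{|q|-|p|}(p), q⟩ / |Aut q|`. -/
noncomputable def uext (p q : C.Obj) : ℚ :=
  ((C.Uop ^ (C.rank q - C.rank p)) (Finsupp.single p 1)) q

/-- Extended multiplicity `d(p;q)`: the coefficient of `p` in
`D^{|q|-|p|}(q)`. -/
noncomputable def dext (p q : C.Obj) : ℚ :=
  ((C.Dop ^ (C.rank q - C.rank p)) (Finsupp.single q 1)) p

/-- The weak commutation condition with eigenvalue function `ε`:
every object is an eigenvector of `DU - UD`. -/
def WCC (ε : C.Obj → ℚ) : Prop :=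
  ∀ p : C.Obj, C.commDU (Finsupp.single p 1) = ε p • Finsupp.single p 1

/-- The sequential commutation condition: `DU - UD` acts as the scalar `r i`
on rank `i`. -/
def SCC (r : ℕ → ℚ) : Prop :=
  ∀ p : C.Obj, C.commDU (Finsupp.single p 1) = r (C.rank p) • Finsupp.single p 1

end UpdownData

namespace UpdownData

variable {C : UpdownData}

lemma card_aut_ne_zero (hC : C.IsUpdownCat) (p : C.Obj) :
    (Nat.card (C.Hom p p) : ℚ) ≠ 0 := by
  haveI := hC.homFinite p p
  haveI : Nonempty (C.Hom p p) := ⟨C.id p⟩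
  exact_mod_cast Nat.card_pos.ne'

lemma inner_add_left (x x' y : C.Vec) :
    C.innerUD (x + x') y = C.innerUD x y + C.innerUD x' y := by
  unfold innerUD
  apply Finsupp.sum_add_index' <;> intros <;> ring

lemma inner_single_left (p : C.Obj) (c : ℚ) (y : C.Vec) :
    C.innerUD (Finsupp.single p c) y = c * y p * (Nat.card (C.Hom p p) : ℚ) := by
  unfold innerUD
  exact Finsupp.sum_single_index (by ring)

lemma inner_single_right (x : C.Vec) (q : C.Obj) (e : ℚ) :
    C.innerUD x (Finsupp.single q e) = x q * e * (Nat.card (C.Hom q q) : ℚ) := by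
  unfold innerUD
  rw [Finsupp.sum, Finset.sum_eq_single q]
  · simp
  · intro b _ hb
    simp [Finsupp.single_apply, (Ne.symm hb : q ≠ b)]
  · intro hq
    simp [Finsupp.notMem_support_iff.mp hq]

lemma inner_add_right (x y y' : C.Vec) :
    C.innerUD x (y + y') = C.innerUD x y + C.innerUD x y' := by
  unfold innerUD
  rw [Finsupp.sum, Finsupp.sum, Finsupp.sum, ← Finset.sum_add_distrib]
  apply Finset.sum_congr rfl
  intro p _
  simp [mul_add, add_mul]

open Classical in
lemma Uvec_apply (p q : C.Obj) :
    (C.Uvec p) q = if q ∈ C.level (C.rank p + 1) then C.uQ p q else 0 := by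
  unfold Uvec
  rw [Finsupp.finset_sum_apply]
  have : ∀ r ∈ C.level (C.rank p + 1),
      ((C.uQ p r • Finsupp.single r (1:ℚ)) q) = if r = q then C.uQ p q else 0 := by
    intro r _
    by_cases hr : r = q <;> simp [Finsupp.single_apply, hr]
  rw [Finset.sum_congr rfl this, Finset.sum_ite_eq' _ q]

open Classical in
lemma key_identity (hC : C.IsUpdownCat) (p q : C.Obj) :
    (C.Uvec p) q * (Nat.card (C.Hom q q) : ℚ)
      = (C.Dvec q) p * (Nat.card (C.Hom p p) : ℚ) := by
  rw [Uvec_apply]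
  by_cases h : C.rank q = C.rank p + 1
  · have hq : q ∈ C.level (C.rank p + 1) := (hC.mem_level _ q).mpr h
    have hq0 : C.rank q ≠ 0 := by omega
    have hp : p ∈ C.level (C.rank q - 1) := (hC.mem_level _ p).mpr (by omega)
    rw [if_pos hq]
    unfold Dvec
    rw [if_neg hq0, Finsupp.finset_sum_apply]
    have : ∀ r ∈ C.level (C.rank q - 1),
        ((C.dQ r q • Finsupp.single r (1:ℚ)) p) = if r = p then C.dQ p q else 0 := by
      intro r _
      by_cases hr : r = p <;> simp [Finsupp.single_apply, hr]
    rw [Finset.sum_congr rfl this, Finset.sum_ite_eq' _ p, if_pos hp]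
    unfold uQ dQ
    rw [div_mul_cancel₀ _ (card_aut_ne_zero hC q), div_mul_cancel₀ _ (card_aut_ne_zero hC p)]
  · have hq : q ∉ C.level (C.rank p + 1) := fun hmem => h ((hC.mem_level _ q).mp hmem)
    rw [if_neg hq, zero_mul]
    unfold Dvec
    by_cases hq0 : C.rank q = 0
    · simp [hq0]
    · rw [if_neg hq0, Finsupp.finset_sum_apply]
      have hp : p ∉ C.level (C.rank q - 1) := by
        intro hmem
        have := (hC.mem_level _ p).mp hmem
        omega
      have : ∀ r ∈ C.level (C.rank q - 1),
          ((C.dQ r q • Finsupp.single r (1:ℚ)) p) = 0 := by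
        intro r hr
        have hrp : r ≠ p := fun hrp => hp (hrp ▸ hr)
        simp [Finsupp.single_apply, hrp]
      rw [Finset.sum_congr rfl this, Finset.sum_const_zero, zero_mul]

end UpdownData

open UpdownData in
/-- the up and down operators are adjoint with respect to the
inner product with `⟨p,p⟩ = |Aut(p)|` on basis elements. -/
theorem updown_U_D_adjoint (C : UpdownData) (hC : C.IsUpdownCat)
    (x y : C.Vec) :
    C.innerUD (C.Uop x) y = C.innerUD x (C.Dop y) := by
  induction x using Finsupp.induction_linear with
  | zero => simp [map_zero, innerUD, Finsupp.sum_zero_index]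
  | add a b ha hb => rw [map_add, inner_add_left, inner_add_left, ha, hb]
  | single p c =>
    induction y using Finsupp.induction_linear with
    | zero =>
      rw [map_zero]
      unfold innerUD
      simp
    | add a b ha hb => rw [map_add, inner_add_right, inner_add_right, ha, hb]
    | single q e =>
      have hU : C.Uop (Finsupp.single p c) = c • C.Uvec p := by
        simp [Uop, Finsupp.lsum_single, LinearMap.toSpanSingleton_apply]
      have hD : C.Dop (Finsupp.single q e) = e • C.Dvec q := by
        simp [Dop, Finsupp.lsum_single, LinearMap.toSpanSingleton_apply]
      rw [hU, hD, inner_single_left, inner_single_right]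
      have key := key_identity hC p q
      simp only [Finsupp.smul_apply, smul_eq_mul]
      calc c * (C.Uvec p) q * e * (Nat.card (C.Hom q q) : ℚ)
          = c * e * ((C.Uvec p) q * (Nat.card (C.Hom q q) : ℚ)) := by ring
        _ = c * e * ((C.Dvec q) p * (Nat.card (C.Hom p p) : ℚ)) := by rw [key]
        _ = c * (e * (C.Dvec q) p) * (Nat.card (C.Hom p p) : ℚ) := by ring
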